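/- Let u ∈ {1,...,m} and suppose Im(a_{ju}) ≠ 0 for some j ∈ {2,...,k}. Suppose V : Ω_ℝ → ℂ is ℝ-differentiable on a domain Ω_ℝ ⊂ ℝ^k and satisfies ∂V/∂x_j = a_{ju} · ∂V/∂x_1 for all j = 2,...,k. Then, writing τ + iη := x_1 + Σ_{j=2}^k x_j a_{ju} (so τ = x_1 + Σ x_j Re a_{ju}, η = Σ x_j Im a_{ju}), V satisfies the Cauchy–Riemann relation ∂V/∂η = i ∂V/∂τ; consequently V is locally a holomorphic function of the complex variable ξ_u = x_1 + Σ_{j=2}^k x_j a_{ju}. -/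

import Mathlib

/-- Lemma 3: if an ℝ-differentiable `V : Ω_ℝ → ℂ` satisfies
`∂V/∂x_j = a_j ∂V/∂x_1` (with `a_1 = 1` and some `a_j` non-real) on a domain
convex with respect to the kernel directions of `ξ(x) = ∑_j x_j a_j`, then `V`
is a holomorphic function of the complex variable `ξ`. -/
theorem holomorphic_of_CR {k : ℕ} [NeZero k] (a : Fin k → ℂ) (ha0 : a 0 = 1)
    (hnr : ∃ j : Fin k, j ≠ 0 ∧ (a j).im ≠ 0)
    (Ω : Set (Fin k → ℝ)) (hΩo : IsOpen Ω) (hΩc : IsConnected Ω)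
    (hconv : ∀ p ∈ Ω, ∀ q ∈ Ω,
      (∑ j, ((q j : ℂ) - (p j : ℂ)) * a j) = 0 → segment ℝ p q ⊆ Ω)
    (V : (Fin k → ℝ) → ℂ) (hV : DifferentiableOn ℝ V Ω)
    (hCR : ∀ x ∈ Ω, ∀ j : Fin k,
      fderiv ℝ V x (Pi.single j 1) = a j * fderiv ℝ V x (Pi.single 0 1)) :
    ∃ F : ℂ → ℂ,
      DifferentiableOn ℂ F ((fun x : Fin k → ℝ => ∑ j, (x j : ℂ) * a j) '' Ω) ∧
      ∀ x ∈ Ω, V x = F (∑ j, (x j : ℂ) * a j) := by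
  classical
  obtain ⟨j₀, hj₀, him⟩ := hnr
  -- the complex-linear functional ξ as a continuous ℝ-linear map
  set L : (Fin k → ℝ) →L[ℝ] ℂ :=
    ∑ j, (a j) • ((Complex.ofRealCLM).comp (ContinuousLinearMap.proj j)) with hLdef
  have hL : ∀ x, L x = ∑ j, (x j : ℂ) * a j := by
    intro x
    simp [hLdef, ContinuousLinearMap.sum_apply, mul_comm, Complex.real_smul, smul_eq_mul]
  have hLs : ∀ (j : Fin k) (t : ℝ), L (Pi.single j t) = (t : ℂ) * a j := by
    intro j t
    rw [hL, Finset.sum_eq_single j]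
    · simp
    · intro i _ hij
      simp [Pi.single_eq_of_ne hij]
    · simp
  -- the derivative of V at x ∈ Ω is c(x) • L
  have key : ∀ x ∈ Ω,
      HasFDerivAt V ((fderiv ℝ V x (Pi.single 0 1)) • L) x := by
    intro x hx
    have hdx : DifferentiableAt ℝ V x := (hV x hx).differentiableAt (hΩo.mem_nhds hx)
    have heq : fderiv ℝ V x = (fderiv ℝ V x (Pi.single 0 1)) • L := by
      ext1 v
      have hv : v = ∑ j, Pi.single j (v j) := (Finset.univ_sum_single v).symm
      rw [hv, map_sum, ContinuousLinearMap.smul_apply, map_sum, Finset.smul_sum]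
      refine Finset.sum_congr rfl fun j _ => ?_
      have h1 : (Pi.single j (v j) : Fin k → ℝ) = (v j) • (Pi.single j 1 : Fin k → ℝ) := by
        funext i
        by_cases h : i = j
        · subst h; simp
        · simp [Pi.single_eq_of_ne h]
      rw [h1, map_smul, map_smul, hCR x hx j, hLs]
      simp only [Complex.real_smul, smul_eq_mul, Complex.ofReal_one, one_mul]
      ring
    rw [← heq]
    exact hdx.hasFDerivAt
  -- V is constant on fibers of L within Ω
  have hconst : ∀ p ∈ Ω, ∀ q ∈ Ω, L p = L q → V p = V q := by
    intro p hp q hq hpq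
    have hker : (∑ j, ((q j : ℂ) - (p j : ℂ)) * a j) = 0 := by
      have h0 : L q - L p = 0 := by rw [hpq, sub_self]
      rw [hL, hL, ← Finset.sum_sub_distrib] at h0
      rw [← h0]
      exact Finset.sum_congr rfl fun j _ => by ring
    have hseg := hconv p hp q hq hker
    set γ : ℝ → (Fin k → ℝ) := fun t => p + t • (q - p) with hγdef
    have hγmem : ∀ t ∈ Set.Icc (0:ℝ) 1, γ t ∈ Ω := by
      intro t ht
      refine hseg ⟨1 - t, t, by linarith [ht.2], ht.1, by ring, ?_⟩
      funext i
      simp [hγdef]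
      ring
    have hφ : ∀ t ∈ Set.Icc (0:ℝ) 1, HasDerivAt (fun t => V (γ t)) 0 t := by
      intro t ht
      have hγ' : HasDerivAt γ (q - p) t := by
        rw [hγdef]
        simpa using ((hasDerivAt_id t).smul_const (q - p)).const_add p
      have := (key (γ t) (hγmem t ht)).comp_hasDerivAt t hγ'
      have hz : ((fderiv ℝ V (γ t) (Pi.single 0 1)) • L) (q - p) = 0 := by
        rw [ContinuousLinearMap.smul_apply, map_sub, hpq, sub_self, smul_zero]
      rwa [hz] at this
    have h01 : (1:ℝ) ∈ Set.Icc (0:ℝ) 1 := by norm_num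
    have := constant_of_has_deriv_right_zero
      (f := fun t => V (γ t)) (a := 0) (b := 1)
      (fun t ht => ((hφ t ht).continuousAt).continuousWithinAt)
      (fun t ht => ((hφ t (Set.mem_Icc_of_Ico ht)).hasDerivWithinAt)) 1 h01
    simpa [hγdef] using this.symm
  -- definition of F
  set F : ℂ → ℂ := fun z => if h : ∃ x ∈ Ω, L x = z then V h.choose else 0 with hFdef
  have hF : ∀ x ∈ Ω, F (L x) = V x := by
    intro x hx
    have h : ∃ y ∈ Ω, L y = L x := ⟨x, hx, rfl⟩
    rw [hFdef]
    simp only [dif_pos h]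
    exact hconst _ h.choose_spec.1 _ hx h.choose_spec.2
  -- right inverse of L
  set T : ℂ →L[ℝ] ℝ := Complex.reCLM - ((a j₀).re / (a j₀).im) • Complex.imCLM with hTdef
  set Rm : ℂ →L[ℝ] ℝ := ((a j₀).im)⁻¹ • Complex.imCLM with hRdef
  set s : ℂ →L[ℝ] (Fin k → ℝ) :=
    ContinuousLinearMap.pi (fun i => if i = 0 then T else if i = j₀ then Rm else 0) with hsdef
  have hsz : ∀ z, s z = Pi.single 0 (T z) + Pi.single j₀ (Rm z) := by
    intro z
    funext i
    by_cases h0 : i = 0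
    · subst h0
      simp [hsdef, ContinuousLinearMap.pi_apply, Pi.single_eq_same,
        Pi.single_eq_of_ne (Ne.symm hj₀)]
    · by_cases hj : i = j₀
      · subst hj
        simp [hsdef, ContinuousLinearMap.pi_apply, Pi.single_eq_same,
          Pi.single_eq_of_ne h0, hj₀]
      · simp [hsdef, ContinuousLinearMap.pi_apply, h0, hj,
          Pi.single_eq_of_ne h0, Pi.single_eq_of_ne hj]
  have hs : ∀ z, L (s z) = z := by
    intro z
    rw [hsz, map_add, hLs, hLs, ha0, mul_one]
    apply Complex.ext
    · simp [hTdef, hRdef, Complex.mul_re]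
      field_simp
      ring
    · simp [hRdef, Complex.mul_im]
      field_simp
  refine ⟨F, ?_, ?_⟩
  · -- differentiability
    have himg : ((fun x : Fin k → ℝ => ∑ j, (x j : ℂ) * a j) '' Ω) = L '' Ω := by
      apply Set.image_congr
      intro x _
      exact (hL x).symm
    rw [himg]
    rintro z₀ ⟨x₀, hx₀, rfl⟩
    set c : ℂ := fderiv ℝ V x₀ (Pi.single 0 1) with hcdef
    set g : ℂ → (Fin k → ℝ) := fun z => x₀ + s (z - L x₀) with hgdef
    have hg0 : g (L x₀) = x₀ := by simp [hgdef]
    have hgc : Continuous g := by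
      apply Continuous.add continuous_const
      exact s.continuous.comp (continuous_id.sub continuous_const)
    have hmemnh : ∀ᶠ z in nhds (L x₀), g z ∈ Ω := by
      have : Ω ∈ nhds (g (L x₀)) := hΩo.mem_nhds (by rw [hg0]; exact hx₀)
      exact hgc.continuousAt.preimage_mem_nhds this
    have heq : F =ᶠ[nhds (L x₀)] (V ∘ g) := by
      filter_upwards [hmemnh] with z hz
      have : L (g z) = z := by
        rw [hgdef]
        simp only [map_add, hs]
        ring
      show F z = V (g z)
      rw [← hF (g z) hz, this]
    have hgd : HasFDerivAt g s (L x₀) := by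
      have h2 : HasFDerivAt (fun z : ℂ => s (z - L x₀)) s (L x₀) := by
        have he : (fun z : ℂ => s (z - L x₀)) = fun z => s z - s (L x₀) := by
          funext z; rw [map_sub]
        rw [he]
        simpa using (s.hasFDerivAt (x := L x₀)).sub_const (s (L x₀))
      exact h2.const_add x₀
    have hVg : HasFDerivAt (V ∘ g) ((c • L).comp s) (L x₀) := by
      have h' : HasFDerivAt V (c • L) (g (L x₀)) := by
        rw [hg0]; exact key x₀ hx₀
      exact h'.comp (L x₀) hgd
    have hA : ((c • ContinuousLinearMap.id ℂ ℂ).restrictScalars ℝ) = (c • L).comp s := by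
      ext1 z
      simp [hs z, smul_eq_mul]
    have hFd : HasFDerivAt F (c • ContinuousLinearMap.id ℂ ℂ) (L x₀) := by
      have h := hasFDerivAt_of_restrictScalars ℝ hVg hA
      exact h.congr_of_eventuallyEq heq
    exact hFd.differentiableAt.differentiableWithinAt
  · intro x hx
    rw [← hL, hF x hx]
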